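/- Let U ∈ R^{n×m} have distinct unit columns positively spanning R^n. If the polytopes {(γ(U,b), b) : b ∈ R^m_{≥0}, vol(P(U,b)) = 1} form a convex subset of R^m × R^m, then m = n + 1. Key step: if there exist b, b̃ ∈ R^m_{≥0} with vol(P(U,b)) = vol(P(U,b̃)) = 1 such that P(U,b) and P(U,b̃) are not translates of each other, then vol(P(U, (b+b̃)/2)) > 1 by the equality case of the Brunn–Minkowski inequality, contradicting convexity. -/

import Mathlib

open MeasureTheory
open scoped RealInnerProductSpace Pointwise

set_option maxHeartbeats 1000000

noncomputable section

def polyhedron {n m : ℕ} (U : Fin m → EuclideanSpace ℝ (Fin n)) (b : Fin m → ℝ) :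
    Set (EuclideanSpace ℝ (Fin n)) :=
  {x | ∀ i, ⟪U i, x⟫ ≤ b i}

def coneVol {n m : ℕ} (U : Fin m → EuclideanSpace ℝ (Fin n)) (b : Fin m → ℝ) :
    Fin m → ℝ := fun i =>
  b i / n * (μH[(n : ℝ) - 1] (polyhedron U b ∩ {x | ⟪U i, x⟫ = b i})).toReal

def PosSpanning {n m : ℕ} (U : Fin m → EuclideanSpace ℝ (Fin n)) : Prop :=
  ∀ x : EuclideanSpace ℝ (Fin n),
    ∃ c : Fin m → ℝ, (∀ i, 0 ≤ c i) ∧ x = ∑ i, c i • U i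

variable {n m : ℕ} {U : Fin m → EuclideanSpace ℝ (Fin n)} {b c : Fin m → ℝ}

lemma poly_eq_iInter (U : Fin m → EuclideanSpace ℝ (Fin n)) (b : Fin m → ℝ) :
    polyhedron U b = ⋂ i, {x : EuclideanSpace ℝ (Fin n) | ⟪U i, x⟫ ≤ b i} := by
  ext x; simp [polyhedron, Set.mem_iInter]

lemma poly_closed (U : Fin m → EuclideanSpace ℝ (Fin n)) (b : Fin m → ℝ) :
    IsClosed (polyhedron U b) := by
  rw [poly_eq_iInter]
  exact isClosed_iInter fun i =>
    isClosed_le (Continuous.inner continuous_const continuous_id) continuous_const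

lemma poly_convex (U : Fin m → EuclideanSpace ℝ (Fin n)) (b : Fin m → ℝ) :
    Convex ℝ (polyhedron U b) := by
  rw [poly_eq_iInter]
  refine convex_iInter fun i => convex_halfSpace_le ?_ _
  exact ⟨fun x y => inner_add_right _ _ _, fun c x => real_inner_smul_right _ _ _⟩

lemma poly_mono (h : b ≤ c) : polyhedron U b ⊆ polyhedron U c :=
  fun x hx i => (hx i).trans (h i)

lemma poly_smul {c : ℝ} (hc : 0 < c) (b : Fin m → ℝ) :
    polyhedron U (c • b) = c • polyhedron U b := by
  have key : ∀ x : EuclideanSpace ℝ (Fin n),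
      x ∈ polyhedron U (c • b) ↔ c⁻¹ • x ∈ polyhedron U b := by
    intro x
    constructor
    · intro h i
      rw [real_inner_smul_right, inv_mul_le_iff₀ hc]
      exact h i
    · intro h i
      have h2 := h i
      rw [real_inner_smul_right, inv_mul_le_iff₀ hc] at h2
      exact h2
  ext x
  rw [Set.mem_smul_set_iff_inv_smul_mem₀ hc.ne', ← key]

lemma poly_vol_smul {c : ℝ} (hc : 0 < c) (b : Fin m → ℝ) :
    volume (polyhedron U (c • b)) = ENNReal.ofReal (c ^ n) * volume (polyhedron U b) := by
  rw [poly_smul hc, Measure.addHaar_smul_of_nonneg _ hc.le, finrank_euclideanSpace_fin]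

lemma poly_bounded (hpos : PosSpanning U) (b : Fin m → ℝ) :
    ∃ R : ℝ, polyhedron U b ⊆ Metric.closedBall 0 R := by
  have hdir : ∀ w : EuclideanSpace ℝ (Fin n), ∃ R : ℝ,
      ∀ x ∈ polyhedron U b, ⟪w, x⟫ ≤ R := by
    intro w
    obtain ⟨c, hc0, hw⟩ := hpos w
    refine ⟨∑ i, c i * b i, fun x hx => ?_⟩
    rw [hw, sum_inner]
    refine Finset.sum_le_sum fun i _ => ?_
    rw [real_inner_smul_left]
    exact mul_le_mul_of_nonneg_left (hx i) (hc0 i)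
  choose R hR using hdir
  set M : Fin n → ℝ := fun k =>
    max (R (EuclideanSpace.single k 1)) (R (-EuclideanSpace.single k 1)) with hM
  refine ⟨Real.sqrt (∑ k, M k ^ 2), fun x hx => ?_⟩
  rw [Metric.mem_closedBall, dist_zero_right, EuclideanSpace.norm_eq]
  refine Real.sqrt_le_sqrt (Finset.sum_le_sum fun k _ => ?_)
  have h1 : x k ≤ M k := by
    have := hR (EuclideanSpace.single k 1) x hx
    rw [EuclideanSpace.inner_single_left] at this
    have h1' : x k ≤ R (EuclideanSpace.single k 1) := by simpa using this
    exact h1'.trans (le_max_left _ _)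
  have h2 : -(M k) ≤ x k := by
    have := hR (-EuclideanSpace.single k 1) x hx
    rw [inner_neg_left, EuclideanSpace.inner_single_left] at this
    have := neg_le_neg this
    simp only [neg_neg] at this
    calc -(M k) ≤ -(R (-EuclideanSpace.single k 1)) :=
          neg_le_neg (le_max_right _ _)
      _ ≤ x k := by simpa using this
  have : |x k| ≤ M k := abs_le.2 ⟨h2, h1⟩
  calc ‖x k‖ ^ 2 = |x k| ^ 2 := by rw [Real.norm_eq_abs]
    _ ≤ M k ^ 2 := by nlinarith [abs_nonneg (x k)]

lemma poly_vol_lt_top (hpos : PosSpanning U) (b : Fin m → ℝ) :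
    volume (polyhedron U b) < ⊤ := by
  obtain ⟨R, hR⟩ := poly_bounded hpos b
  exact (measure_mono hR).trans_lt measure_closedBall_lt_top

lemma poly_vol_pos (hm : 0 < m) (hunit : ∀ i, ‖U i‖ = 1) {b : Fin m → ℝ}
    (hb : ∀ i, 0 < b i) : 0 < volume (polyhedron U b) := by
  haveI : Nonempty (Fin m) := ⟨⟨0, hm⟩⟩
  set r : ℝ := Finset.univ.inf' Finset.univ_nonempty b with hr
  have hrpos : 0 < r := by
    rw [hr, Finset.lt_inf'_iff]
    exact fun i _ => hb i
  have hsub : Metric.ball 0 r ⊆ polyhedron U b := by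
    intro x hx i
    have h1 : ⟪U i, x⟫ ≤ ‖x‖ := by
      calc ⟪U i, x⟫ ≤ ‖U i‖ * ‖x‖ := real_inner_le_norm _ _
        _ = ‖x‖ := by rw [hunit i, one_mul]
    have h2 : ‖x‖ < r := by simpa [dist_zero_right] using hx
    have h3 : r ≤ b i := Finset.inf'_le _ (Finset.mem_univ i)
    linarith
  exact (Metric.measure_ball_pos volume 0 hrpos).trans_le (measure_mono hsub)

def Fv {n m : ℕ} (U : Fin m → EuclideanSpace ℝ (Fin n)) (b : Fin m → ℝ) : ℝ :=
  (volume (polyhedron U b)).toReal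

def gv {n m : ℕ} (U : Fin m → EuclideanSpace ℝ (Fin n)) (b : Fin m → ℝ) : ℝ :=
  Fv U b ^ ((n : ℝ)⁻¹)

lemma Fv_pos (hm : 0 < m) (hunit : ∀ i, ‖U i‖ = 1) (hpos : PosSpanning U)
    {b : Fin m → ℝ} (hb : ∀ i, 0 < b i) : 0 < Fv U b :=
  ENNReal.toReal_pos (poly_vol_pos hm hunit hb).ne' (poly_vol_lt_top hpos b).ne

lemma gv_pos (hm : 0 < m) (hunit : ∀ i, ‖U i‖ = 1) (hpos : PosSpanning U)
    {b : Fin m → ℝ} (hb : ∀ i, 0 < b i) : 0 < gv U b :=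
  Real.rpow_pos_of_pos (Fv_pos hm hunit hpos hb) _

lemma gv_pow (hn : 0 < n) {b : Fin m → ℝ} (h : 0 ≤ Fv U b) : gv U b ^ n = Fv U b := by
  rw [gv, ← Real.rpow_natCast (Fv U b ^ ((n:ℝ)⁻¹)) n, ← Real.rpow_mul h,
    inv_mul_cancel₀ (by exact_mod_cast hn.ne' : (n:ℝ) ≠ 0), Real.rpow_one]

lemma Fv_smul {c : ℝ} (hc : 0 < c) (b : Fin m → ℝ) : Fv U (c • b) = c ^ n * Fv U b := by
  rw [Fv, Fv, poly_vol_smul hc, ENNReal.toReal_mul, ENNReal.toReal_ofReal (by positivity)]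

lemma vol_norm (hn : 0 < n) (hm : 0 < m) (hunit : ∀ i, ‖U i‖ = 1) (hpos : PosSpanning U)
    {x : Fin m → ℝ} (hx : ∀ i, 0 < x i) :
    volume (polyhedron U ((gv U x)⁻¹ • x)) = 1 := by
  have hF := Fv_pos hm hunit hpos hx
  have hg := gv_pos hm hunit hpos hx
  have h1 : Fv U ((gv U x)⁻¹ • x) = 1 := by
    rw [Fv_smul (inv_pos.2 hg), inv_pow, gv_pow hn hF.le]
    field_simp
  have hne : volume (polyhedron U ((gv U x)⁻¹ • x)) ≠ ⊤ := (poly_vol_lt_top hpos _).ne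
  rw [← ENNReal.ofReal_toReal hne]
  rw [Fv] at h1
  rw [h1, ENNReal.ofReal_one]

lemma Fv_add (hn : 0 < n) (hm : 0 < m) (hunit : ∀ i, ‖U i‖ = 1) (hpos : PosSpanning U)
    (hconv : Convex ℝ {p : (Fin m → ℝ) × (Fin m → ℝ) |
      ∃ b : Fin m → ℝ, (∀ i, 0 ≤ b i) ∧ volume (polyhedron U b) = 1 ∧
        p = (coneVol U b, b)})
    {x y : Fin m → ℝ} (hx : ∀ i, 0 < x i) (hy : ∀ i, 0 < y i) :
    Fv U (x + y) = (gv U x + gv U y) ^ n := by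
  set gx := gv U x with hgx
  set gy := gv U y with hgy
  have hgxp : 0 < gx := gv_pos hm hunit hpos hx
  have hgyp : 0 < gy := gv_pos hm hunit hpos hy
  set bx : Fin m → ℝ := gx⁻¹ • x with hbx
  set by' : Fin m → ℝ := gy⁻¹ • y with hby
  have hmx : (coneVol U bx, bx) ∈ {p : (Fin m → ℝ) × (Fin m → ℝ) |
      ∃ b : Fin m → ℝ, (∀ i, 0 ≤ b i) ∧ volume (polyhedron U b) = 1 ∧
        p = (coneVol U b, b)} :=
    ⟨bx, fun i => by
        have := (hx i).le
        simp only [hbx, Pi.smul_apply, smul_eq_mul]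
        positivity,
      vol_norm hn hm hunit hpos hx, rfl⟩
  have hmy : (coneVol U by', by') ∈ {p : (Fin m → ℝ) × (Fin m → ℝ) |
      ∃ b : Fin m → ℝ, (∀ i, 0 ≤ b i) ∧ volume (polyhedron U b) = 1 ∧
        p = (coneVol U b, b)} :=
    ⟨by', fun i => by
        have := (hy i).le
        simp only [hby, Pi.smul_apply, smul_eq_mul]
        positivity,
      vol_norm hn hm hunit hpos hy, rfl⟩
  have hsum : 0 < gx + gy := by linarith
  have hcomb := hconv hmx hmy (a := gx / (gx + gy)) (b := gy / (gx + gy))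
    (by positivity) (by positivity) (by field_simp)
  obtain ⟨b'', _, hvol'', heq⟩ := hcomb
  have hsnd : (gx / (gx + gy)) • bx + (gy / (gx + gy)) • by' = b'' := by
    have := congrArg Prod.snd heq
    simpa using this
  have hble : (gx / (gx + gy)) • bx + (gy / (gx + gy)) • by' = (gx + gy)⁻¹ • (x + y) := by
    funext i
    simp only [hbx, hby, Pi.add_apply, Pi.smul_apply, smul_eq_mul]
    field_simp
  rw [hble] at hsnd
  rw [← hsnd] at hvol''
  have hF'' : Fv U ((gx + gy)⁻¹ • (x + y)) = 1 := by
    rw [Fv, hvol'', ENNReal.toReal_one]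
  rw [Fv_smul (inv_pos.2 hsum), inv_pow] at hF''
  have hpow : (0:ℝ) < (gx + gy) ^ n := by positivity
  field_simp at hF''
  linarith [hF'']

lemma root_pow {n : ℕ} (hn : 0 < n) {z : ℝ} (hz : 0 ≤ z) :
    ((z ^ n : ℝ)) ^ ((n:ℝ)⁻¹) = z := by
  rw [← Real.rpow_natCast z n, ← Real.rpow_mul hz,
    mul_inv_cancel₀ (by exact_mod_cast hn.ne' : (n:ℝ) ≠ 0), Real.rpow_one]

lemma sep_point (hn : 0 < n) (hm : 0 < m) (hunit : ∀ i, ‖U i‖ = 1)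
    (hinj : Function.Injective U) (hpos : PosSpanning U)
    (hconv : Convex ℝ {p : (Fin m → ℝ) × (Fin m → ℝ) |
      ∃ b : Fin m → ℝ, (∀ i, 0 ≤ b i) ∧ volume (polyhedron U b) = 1 ∧
        p = (coneVol U b, b)})
    (j : Fin m) :
    ∃ x : EuclideanSpace ℝ (Fin n), ∀ i, i ≠ j → ⟪U i, x⟫ < 0 := by
  classical
  by_cases hall : ∀ i : Fin m, i = j
  · exact ⟨0, fun i hi => absurd (hall i) hi⟩
  push_neg at hall
  obtain ⟨i₁, hi₁⟩ := hall
  have hs : (Finset.univ.erase j).Nonempty := ⟨i₁, Finset.mem_erase.2 ⟨hi₁, Finset.mem_univ _⟩⟩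
  set η : ℝ := (Finset.univ.erase j).inf' hs (fun i => 1 - ⟪U i, U j⟫) with hη
  have hηpos : 0 < η := by
    rw [hη, Finset.lt_inf'_iff]
    intro i hi
    have hij : i ≠ j := (Finset.mem_erase.1 hi).1
    have hne : U i - U j ≠ 0 := sub_ne_zero.2 fun h => hij (hinj h)
    have h2 : 0 < ‖U i - U j‖ ^ 2 := pow_pos (norm_pos_iff.2 hne) 2
    rw [norm_sub_sq_real, hunit i, hunit j] at h2
    nlinarith
  have hηle : ∀ i, i ≠ j → ⟪U i, U j⟫ ≤ 1 - η := by
    intro i hij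
    have := Finset.inf'_le (f := fun i => 1 - ⟪U i, U j⟫)
      (Finset.mem_erase.2 ⟨hij, Finset.mem_univ i⟩)
    linarith [this]
  set δ : ℝ := min η 1 / 4 with hδ
  have hδpos : 0 < δ := by
    have h01 : 0 < min η 1 := lt_min hηpos one_pos
    rw [hδ]; linarith
  have hδη : δ ≤ η / 4 := by rw [hδ]; have := min_le_left η 1; linarith
  have hδ1 : δ ≤ 1 / 4 := by rw [hδ]; have := min_le_right η 1; linarith
  set ρ : ℝ := δ / 2 with hρ
  have hρpos : 0 < ρ := by rw [hρ]; linarith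
  set p : EuclideanSpace ℝ (Fin n) := (1 + δ) • U j with hp
  set onev : Fin m → ℝ := fun _ => 1 with honev
  set b0 : Fin m → ℝ := fun i => if i = j then 1 else 0 with hb0
  -- inner products with points of the ball
  have hball : ∀ z ∈ Metric.ball p ρ, ∀ i,
      ⟪U i, z⟫ ≤ (1 + δ) * ⟪U i, U j⟫ + ρ ∧ (1 + δ) * ⟪U i, U j⟫ - ρ ≤ ⟪U i, z⟫ := by
    intro z hz i
    have hzp : ‖z - p‖ < ρ := by
      rw [← dist_eq_norm]; exact Metric.mem_ball.1 hz
    have hin : |⟪U i, z - p⟫| ≤ ρ := by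
      calc |⟪U i, z - p⟫| ≤ ‖U i‖ * ‖z - p‖ := abs_real_inner_le_norm _ _
        _ = ‖z - p‖ := by rw [hunit i, one_mul]
        _ ≤ ρ := hzp.le
    have hexp : ⟪U i, z⟫ = (1 + δ) * ⟪U i, U j⟫ + ⟪U i, z - p⟫ := by
      rw [inner_sub_right, hp, real_inner_smul_right]; ring
    rw [hexp]
    constructor
    · nlinarith [abs_le.1 hin]
    · nlinarith [abs_le.1 hin]
  have hjj : ⟪U j, U j⟫ = 1 := by
    rw [real_inner_self_eq_norm_sq, hunit j, one_pow]
  -- ball inside enlarged polytope, for every ε > 0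
  have hborder : ∀ ε : ℝ, 0 ≤ ε →
      Metric.ball p ρ ⊆ polyhedron U (onev + (b0 + ε • onev)) := by
    intro ε hε z hz i
    obtain ⟨h1, _⟩ := hball z hz i
    by_cases hij : i = j
    · subst hij
      rw [hjj] at h1
      have hval : (onev + (b0 + ε • onev)) i = 2 + ε := by
        simp [honev, hb0]; ring
      rw [hval]
      nlinarith
    · have h2 := hηle i hij
      have hval : (onev + (b0 + ε • onev)) i = 1 + ε := by
        simp [honev, hb0, if_neg hij]
      rw [hval]
      nlinarith
  -- ball disjoint from the unit polytope
  have hdisj : Disjoint (polyhedron U onev) (Metric.ball p ρ) := by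
    rw [Set.disjoint_right]
    intro z hz hzP
    obtain ⟨_, h2⟩ := hball z hz j
    rw [hjj] at h2
    have := hzP j
    simp only [honev] at this
    nlinarith
  -- volume inequality
  have honepos : ∀ i, (0:ℝ) < onev i := fun i => one_pos
  have hVrpos : 0 < (volume (Metric.ball p ρ)).toReal :=
    ENNReal.toReal_pos (Metric.measure_ball_pos volume p hρpos).ne' measure_ball_lt_top.ne
  set Vr : ℝ := (volume (Metric.ball p ρ)).toReal with hVr
  set A0 : ℝ := gv U onev with hA0
  have hA0pos : 0 < A0 := gv_pos hm hunit hpos honepos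
  set c₀ : ℝ := (Fv U onev + Vr) ^ ((n:ℝ)⁻¹) - A0 with hc₀
  have hFonev : 0 < Fv U onev := Fv_pos hm hunit hpos honepos
  have hc₀pos : 0 < c₀ := by
    rw [hc₀, hA0, gv]
    have : Fv U onev < Fv U onev + Vr := by linarith
    have h := Real.rpow_lt_rpow hFonev.le this (by positivity : (0:ℝ) < (n:ℝ)⁻¹)
    linarith
  -- key bound for every ε > 0
  have hkey : ∀ ε : ℝ, 0 < ε →
      ENNReal.ofReal (c₀ ^ n) ≤ volume (polyhedron U (b0 + ε • onev)) := by
    intro ε hε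
    have hypos : ∀ i, 0 < (b0 + ε • onev) i := by
      intro i
      simp only [hb0, honev, Pi.add_apply, Pi.smul_apply, smul_eq_mul, mul_one]
      by_cases hij : i = j <;> simp [hij] <;> linarith
    -- volume superadditivity from the ball
    have hsub : polyhedron U onev ∪ Metric.ball p ρ ⊆
        polyhedron U (onev + (b0 + ε • onev)) := by
      refine Set.union_subset ?_ (hborder ε hε.le)
      refine poly_mono fun i => ?_
      simp only [honev, hb0, Pi.add_apply, Pi.smul_apply, smul_eq_mul, mul_one]
      by_cases hij : i = j <;> simp [hij] <;> linarith
    have hmeas : volume (polyhedron U onev) + volume (Metric.ball p ρ) ≤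
        volume (polyhedron U (onev + (b0 + ε • onev))) := by
      rw [← measure_union hdisj Metric.isOpen_ball.measurableSet]
      exact measure_mono hsub
    have hfin : volume (polyhedron U (onev + (b0 + ε • onev))) ≠ ⊤ :=
      (poly_vol_lt_top hpos _).ne
    have hreal : Fv U onev + Vr ≤ Fv U (onev + (b0 + ε • onev)) := by
      rw [Fv, Fv, hVr, ← ENNReal.toReal_add (poly_vol_lt_top hpos _).ne measure_ball_lt_top.ne]
      exact ENNReal.toReal_le_toReal (by
          exact ENNReal.add_ne_top.2 ⟨(poly_vol_lt_top hpos _).ne, measure_ball_lt_top.ne⟩)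
        hfin |>.2 hmeas
    have hadd := Fv_add hn hm hunit hpos hconv honepos hypos
    set gy : ℝ := gv U (b0 + ε • onev) with hgy
    have hgypos : 0 < gy := gv_pos hm hunit hpos hypos
    have h1 : Fv U onev + Vr ≤ (A0 + gy) ^ n := by
      rw [← hadd]; exact hreal
    have h2 : (Fv U onev + Vr) ^ ((n:ℝ)⁻¹) ≤ A0 + gy := by
      calc (Fv U onev + Vr) ^ ((n:ℝ)⁻¹) ≤ ((A0 + gy) ^ n) ^ ((n:ℝ)⁻¹) :=
            Real.rpow_le_rpow (by linarith) h1 (by positivity)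
        _ = A0 + gy := root_pow hn (by linarith)
    have h3 : c₀ ≤ gy := by rw [hc₀]; linarith
    have h4 : c₀ ^ n ≤ Fv U (b0 + ε • onev) := by
      rw [← gv_pow hn (b := (b0 + ε • onev)) ENNReal.toReal_nonneg, ← hgy]
      exact pow_le_pow_left₀ hc₀pos.le h3 n
    calc ENNReal.ofReal (c₀ ^ n) ≤ ENNReal.ofReal (Fv U (b0 + ε • onev)) :=
          ENNReal.ofReal_le_ofReal h4
      _ = volume (polyhedron U (b0 + ε • onev)) := by
          rw [Fv, ENNReal.ofReal_toReal (poly_vol_lt_top hpos _).ne]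
  -- pass to the limit ε → 0
  have hlim : ENNReal.ofReal (c₀ ^ n) ≤ volume (polyhedron U b0) := by
    set T : ℕ → Set (EuclideanSpace ℝ (Fin n)) :=
      fun k => polyhedron U (b0 + ((k:ℝ)+1)⁻¹ • onev) with hT
    have hTanti : Antitone T := by
      intro k l hkl
      refine poly_mono fun i => ?_
      simp only [honev, Pi.add_apply, Pi.smul_apply, smul_eq_mul, mul_one]
      have hcast : ((k:ℝ)+1) ≤ ((l:ℝ)+1) := by
        have := (Nat.cast_le (α := ℝ)).2 hkl
        linarith
      have : ((l:ℝ)+1)⁻¹ ≤ ((k:ℝ)+1)⁻¹ := by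
        exact inv_anti₀ (by positivity) hcast
      linarith
    have hTinter : ⋂ k, T k = polyhedron U b0 := by
      ext z
      constructor
      · intro hz i
        have hk : ∀ k : ℕ, ⟪U i, z⟫ ≤ b0 i + ((k:ℝ)+1)⁻¹ := by
          intro k
          have := (Set.mem_iInter.1 hz k) i
          simpa [honev] using this
        have htend : Filter.Tendsto (fun k : ℕ => b0 i + ((k:ℝ)+1)⁻¹)
            Filter.atTop (nhds (b0 i + 0)) := by
          refine Filter.Tendsto.add tendsto_const_nhds ?_
          have := tendsto_one_div_add_atTop_nhds_zero_nat (𝕜 := ℝ)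
          simpa [one_div] using this
        rw [add_zero] at htend
        exact ge_of_tendsto' htend hk
      · intro hz
        refine Set.mem_iInter.2 fun k i => ?_
        have := hz i
        simp only [honev, Pi.add_apply, Pi.smul_apply, smul_eq_mul, mul_one]
        have hnn : (0:ℝ) < ((k:ℝ)+1)⁻¹ := by positivity
        linarith [this]
    have htendsto := tendsto_measure_iInter_atTop
      (s := T) (μ := volume)
      (fun k => (poly_closed U _).measurableSet.nullMeasurableSet)
      hTanti ⟨0, (poly_vol_lt_top hpos _).ne⟩
    rw [hTinter] at htendsto
    refine ge_of_tendsto' htendsto fun k => ?_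
    exact hkey _ (by positivity)
  -- positive volume gives an interior point
  have hvolpos : 0 < volume (polyhedron U b0) :=
    lt_of_lt_of_le (ENNReal.ofReal_pos.2 (by positivity)) hlim
  have hfront : volume (frontier (polyhedron U b0)) = 0 :=
    (poly_convex U b0).addHaar_frontier volume
  have hex : ∃ x₀, x₀ ∈ polyhedron U b0 ∧ x₀ ∉ frontier (polyhedron U b0) := by
    by_contra h
    push_neg at h
    have : polyhedron U b0 ⊆ frontier (polyhedron U b0) := fun x hx => h x hx
    exact absurd (measure_mono this) (by rw [hfront]; exact hvolpos.not_ge)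
  obtain ⟨x₀, hx₀P, hx₀F⟩ := hex
  have hx₀int : x₀ ∈ interior (polyhedron U b0) := by
    have hcl : x₀ ∈ closure (polyhedron U b0) := subset_closure hx₀P
    rw [frontier, Set.mem_diff] at hx₀F
    push_neg at hx₀F
    exact hx₀F hcl
  obtain ⟨ε, hεpos, hεball⟩ := Metric.isOpen_iff.1 isOpen_interior x₀ hx₀int
  refine ⟨x₀, fun i hij => ?_⟩
  have hy : x₀ + (ε/2) • U i ∈ polyhedron U b0 := by
    have : x₀ + (ε/2) • U i ∈ Metric.ball x₀ ε := by
      rw [Metric.mem_ball, dist_eq_norm]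
      simp only [add_sub_cancel_left]
      rw [norm_smul, hunit i]
      simp only [mul_one]
      rw [Real.norm_eq_abs, abs_of_pos (by linarith)]
      linarith
    exact interior_subset (hεball this)
  have := hy i
  rw [inner_add_right, real_inner_smul_right, real_inner_self_eq_norm_sq, hunit i] at this
  simp only [hb0, if_neg hij] at this
  nlinarith


theorem stmt_19' (hn : 0 < n) (hunit : ∀ i, ‖U i‖ = 1) (hinj : Function.Injective U)
    (hpos : PosSpanning U)
    (hconv : Convex ℝ {p : (Fin m → ℝ) × (Fin m → ℝ) |
      ∃ b : Fin m → ℝ, (∀ i, 0 ≤ b i) ∧ volume (polyhedron U b) = 1 ∧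
        p = (coneVol U b, b)}) :
    m = n + 1 := by
  classical
  rcases Nat.eq_zero_or_pos m with hm0 | hm
  · exfalso
    subst hm0
    obtain ⟨c, -, hcx⟩ := hpos (EuclideanSpace.single ⟨0, hn⟩ 1)
    rw [Finset.univ_eq_empty, Finset.sum_empty] at hcx
    have := congrArg (fun v => v ⟨0, hn⟩) hcx
    simp [EuclideanSpace.single_apply] at this
  haveI : Nonempty (Fin m) := ⟨⟨0, hm⟩⟩
  -- separating points
  have hxs : ∀ j : Fin m, ∃ x : EuclideanSpace ℝ (Fin n), ∀ i, i ≠ j → ⟪U i, x⟫ < 0 :=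
    sep_point hn hm hunit hinj hpos hconv
  choose xs hxs using hxs
  -- the positive linear dependency
  obtain ⟨c, hc0, hc⟩ := hpos (-∑ i, U i)
  set lam : Fin m → ℝ := fun i => c i + 1 with hlam
  have hlampos : ∀ i, 0 < lam i := fun i => by
    have := hc0 i; rw [hlam]; dsimp only; linarith
  set L := Fintype.linearCombination ℝ U with hLdef
  have hLapp : ∀ f : Fin m → ℝ, L f = ∑ i, f i • U i := fun f => rfl
  have hlamker : L lam = 0 := by
    rw [hLapp]
    have : ∀ i : Fin m, lam i • U i = c i • U i + U i := by
      intro i; rw [hlam]; dsimp only; rw [add_smul, one_smul]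
    rw [Finset.sum_congr rfl fun i _ => this i, Finset.sum_add_distrib, ← hc, neg_add_cancel]
  have hrange : LinearMap.range L = ⊤ := by
    rw [LinearMap.range_eq_top]
    intro x
    obtain ⟨d, -, hd⟩ := hpos x
    exact ⟨d, (hLapp d).trans hd.symm⟩
  have hlamne : lam ≠ 0 := by
    intro h
    have := congrFun h ⟨0, hm⟩
    have h2 := hc0 ⟨0, hm⟩
    rw [hlam] at this; dsimp only at this
    simp only [Pi.zero_apply] at this
    linarith
  have hker : LinearMap.ker L = Submodule.span ℝ {lam} := by
    apply le_antisymm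
    · intro μ hμ
      obtain ⟨i₀, -, hmin⟩ := Finset.exists_min_image Finset.univ
        (fun i => μ i / lam i) Finset.univ_nonempty
      set t : ℝ := μ i₀ / lam i₀ with ht
      have hwge : ∀ i, 0 ≤ μ i - t * lam i := by
        intro i
        have h1 := hmin i (Finset.mem_univ i)
        have h2 : t * lam i ≤ μ i := by
          rw [← le_div_iff₀ (hlampos i)]; exact h1
        linarith
      have hw0 : μ i₀ - t * lam i₀ = 0 := by
        rw [ht, div_mul_cancel₀ _ (hlampos i₀).ne', sub_self]
      have hwker : L (μ - t • lam) = 0 := by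
        rw [map_sub, _root_.map_smul, LinearMap.mem_ker.1 hμ, hlamker, smul_zero, sub_zero]
      have hsum : ∑ i, (μ i - t * lam i) * ⟪U i, xs i₀⟫ = 0 := by
        have h0 : ⟪(L (μ - t • lam) : EuclideanSpace ℝ (Fin n)), xs i₀⟫ = 0 := by
          rw [hwker]; exact inner_zero_left _
        rw [hLapp, sum_inner] at h0
        have hre : ∀ i : Fin m,
            ⟪(μ - t • lam) i • U i, xs i₀⟫ = (μ i - t * lam i) * ⟪U i, xs i₀⟫ := by
          intro i
          rw [real_inner_smul_left]
          congr 1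
        rw [Finset.sum_congr rfl fun i _ => hre i] at h0
        exact h0
      have hterm : ∀ i ∈ Finset.univ, (μ i - t * lam i) * ⟪U i, xs i₀⟫ ≤ 0 := by
        intro i _
        by_cases hii : i = i₀
        · subst hii; rw [hw0, zero_mul]
        · exact mul_nonpos_of_nonneg_of_nonpos (hwge i) (hxs i₀ i hii).le
      have hall0 := (Finset.sum_eq_zero_iff_of_nonpos hterm).1 hsum
      have heq : ∀ i, μ i = t * lam i := by
        intro i
        by_cases hii : i = i₀
        · subst hii; linarith [hw0]
        · have h3 := hall0 i (Finset.mem_univ i)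
          rcases mul_eq_zero.1 h3 with h4 | h4
          · linarith
          · exact absurd h4 (hxs i₀ i hii).ne
      exact Submodule.mem_span_singleton.2
        ⟨t, funext fun i => by rw [Pi.smul_apply, smul_eq_mul, ← heq i]⟩
    · rw [Submodule.span_le, Set.singleton_subset_iff]
      exact LinearMap.mem_ker.2 hlamker
  have hrn := LinearMap.finrank_range_add_finrank_ker L
  rw [hrange, hker, finrank_top, finrank_euclideanSpace_fin,
    finrank_span_singleton hlamne, Module.finrank_fintype_fun_eq_card] at hrn
  simpa [Fintype.card_fin] using hrn.symm

/-- if the set `{(γ(U,b), b) : b ≥ 0, vol(P(U,b)) = 1}` is convex, then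
`m = n + 1`. -/
theorem stmt_19 (n m : ℕ) (hn : 0 < n) (U : Fin m → EuclideanSpace ℝ (Fin n))
    (hunit : ∀ i, ‖U i‖ = 1) (hinj : Function.Injective U) (hpos : PosSpanning U)
    (hconv : Convex ℝ {p : (Fin m → ℝ) × (Fin m → ℝ) |
      ∃ b : Fin m → ℝ, (∀ i, 0 ≤ b i) ∧ volume (polyhedron U b) = 1 ∧
        p = (coneVol U b, b)}) :
    m = n + 1 := by
  exact stmt_19' hn hunit hinj hpos hconv
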